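/- Define σ^GHZ_{a,b|x,y} := (1/8)[ I + ((−1)^b/√2)( Z + x (−1)^{a+y} X ) ] for a, b, x, y ∈ {0,1}. Let Λ = {0,1}², and for λ = (λ₀, λ₁) ∈ Λ set P_λ = 1/4, ϱ_λ = I/2 + ((−1)^{λ₀}/(2√2))( Z + (−1)^{λ₁} X ), and P(a,b|x,y,λ) = δ_{λ₀,b} · (1 + x (−1)^{a+y+λ₁})/2. Then: (i) each ϱ_λ is a density matrix (positive semidefinite with trace 1); (ii) each P(·,·|x,y,λ) is a conditional probability distribution, i.e. P(a,b|x,y,λ) ≥ 0 and ∑_{a,b} P(a,b|x,y,λ) = 1 for all x, y, λ; and (iii) σ^GHZ_{a,b|x,y} = ∑_{λ∈Λ} P_λ P(a,b|x,y,λ) ϱ_λ for all a, b, x, y. Hence σ^GHZ admits an LHS model. -/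

import Mathlib

open Matrix BigOperators ComplexOrder

noncomputable section

/-- Pauli X matrix. -/
def X : Matrix (Fin 2) (Fin 2) ℂ := !![0, 1; 1, 0]

/-- Pauli Z matrix. -/
def Z : Matrix (Fin 2) (Fin 2) ℂ := !![1, 0; 0, -1]

/-- The GHZ assemblage σ^GHZ_{a,b|x,y}. -/
def σGHZ : Fin 2 → Fin 2 → Fin 2 → Fin 2 → Matrix (Fin 2) (Fin 2) ℂ := fun a b x y =>
  (1 / 8 : ℝ) • ((1 : Matrix (Fin 2) (Fin 2) ℂ) +
    ((-1 : ℝ) ^ (b : ℕ) / Real.sqrt 2) •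
      (Z + (((x : ℕ) : ℝ) * (-1 : ℝ) ^ ((a : ℕ) + (y : ℕ))) • X))

/-- A tripartite family `σ a b x y` of 2×2 complex matrices admits an LHS model. -/
def IsLHS3 (σ : Fin 2 → Fin 2 → Fin 2 → Fin 2 → Matrix (Fin 2) (Fin 2) ℂ) : Prop :=
  ∃ (n : ℕ) (P : Fin n → ℝ) (ϱ : Fin n → Matrix (Fin 2) (Fin 2) ℂ)
    (q : Fin 2 → Fin 2 → Fin 2 → Fin 2 → Fin n → ℝ),
    (∀ l, 0 ≤ P l) ∧ (∑ l, P l = 1) ∧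
    (∀ l, (ϱ l).PosSemidef) ∧ (∀ l, (ϱ l).trace = 1) ∧
    (∀ a b x y l, 0 ≤ q a b x y l) ∧
    (∀ x y l, ∑ a, ∑ b, q a b x y l = 1) ∧
    (∀ a b x y, σ a b x y = ∑ l, (P l * q a b x y l) • ϱ l)

/-- The hidden states of the LHS model for the GHZ assemblage. -/
def ϱhid : Fin 2 × Fin 2 → Matrix (Fin 2) (Fin 2) ℂ := fun l =>
  (1 / 2 : ℝ) • (1 : Matrix (Fin 2) (Fin 2) ℂ) +
    ((-1 : ℝ) ^ (l.1 : ℕ) / (2 * Real.sqrt 2)) • (Z + ((-1 : ℝ) ^ (l.2 : ℕ)) • X)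

/-- The hidden behaviors of the LHS model for the GHZ assemblage. -/
def Phid (a b x y : Fin 2) (l : Fin 2 × Fin 2) : ℝ :=
  (if l.1 = b then 1 else 0) *
    ((1 + ((x : ℕ) : ℝ) * (-1 : ℝ) ^ ((a : ℕ) + (y : ℕ) + (l.2 : ℕ))) / 2)

lemma t2 : ((Real.sqrt 2 : ℝ) : ℂ) ^ 2 = 2 := by
  norm_cast; rw [Real.sq_sqrt]; norm_num

lemma tne : ((Real.sqrt 2 : ℝ) : ℂ) ≠ 0 := by
  intro h; have := t2; rw [h] at this; norm_num at this

lemma neg_one_pow_sq' {R : Type*} [Monoid R] [HasDistribNeg R] (n : ℕ) :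
    ((-1 : R) ^ n) ^ 2 = 1 := by
  rw [← pow_mul, mul_comm, pow_mul]; simp

lemma key (c s t : ℂ) (hc : c^2=1) (hs : s^2=1) (ht : t^2=2) (htne : t ≠ 0) :
    !![1/2 + c/(2*t), c*s/(2*t); c*s/(2*t), 1/2 - c/(2*t)] *
    !![1/2 + c/(2*t), c*s/(2*t); c*s/(2*t), 1/2 - c/(2*t)] =
    !![1/2 + c/(2*t), c*s/(2*t); c*s/(2*t), 1/2 - c/(2*t)] := by
  ext i j
  fin_cases i <;> fin_cases j <;>
    · simp only [Matrix.mul_apply, Fin.sum_univ_two, Matrix.cons_val', Matrix.cons_val_zero,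
        Matrix.cons_val_one, Matrix.head_cons, Matrix.head_fin_const, Matrix.empty_val',
        Matrix.cons_val_fin_one, Matrix.of_apply, Fin.zero_eta, Fin.mk_one, Fin.isValue]
      field_simp
      ring_nf
      try linear_combination (2*t + 2*t*s^2) * hc + 2*t*hs - 2*t*ht
      try linear_combination (1 + s^2) * hc + hs - ht

lemma rho_eq (l : Fin 2 × Fin 2) :
    ϱhid l = !![(1/2 : ℂ) + (-1)^(l.1:ℕ)/(2*(Real.sqrt 2:ℂ)), (-1)^(l.1:ℕ)*(-1)^(l.2:ℕ)/(2*(Real.sqrt 2:ℂ));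
                (-1)^(l.1:ℕ)*(-1)^(l.2:ℕ)/(2*(Real.sqrt 2:ℂ)), (1/2 : ℂ) - (-1)^(l.1:ℕ)/(2*(Real.sqrt 2:ℂ))] := by
  ext i j
  fin_cases i <;> fin_cases j <;>
    simp [ϱhid, X, Z, Matrix.one_apply, Complex.ofReal_pow, Complex.ofReal_div] <;> ring

lemma rho_herm (l : Fin 2 × Fin 2) : (ϱhid l)ᴴ = ϱhid l := by
  rw [rho_eq]
  ext i j
  fin_cases i <;> fin_cases j <;>
    simp [Matrix.conjTranspose_apply, Complex.conj_ofReal, map_pow, map_div₀] <;> ring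

lemma rho_psd (l : Fin 2 × Fin 2) : (ϱhid l).PosSemidef := by
  have h : ϱhid l = (ϱhid l)ᴴ * ϱhid l := by
    rw [rho_herm]
    conv_lhs => rw [rho_eq]
    rw [rho_eq]
    exact (key _ _ _ (neg_one_pow_sq' _) (neg_one_pow_sq' _) t2 tne).symm
  rw [h]; exact Matrix.posSemidef_conjTranspose_mul_self _

lemma rho_trace (l : Fin 2 × Fin 2) : (ϱhid l).trace = 1 := by
  rw [rho_eq, Matrix.trace_fin_two]
  simp; ring

lemma phid_nonneg (a b x y : Fin 2) (l : Fin 2 × Fin 2) : 0 ≤ Phid a b x y l := by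
  unfold Phid
  rcases neg_one_pow_eq_one_iff_even (R := ℝ) (n := (a:ℕ)+(y:ℕ)+(l.2:ℕ)) (by norm_num) |>.mpr
    with _
  rcases Nat.even_or_odd ((a:ℕ)+(y:ℕ)+(l.2:ℕ)) with h | h
  · rw [h.neg_one_pow]
    fin_cases x <;> norm_num <;> positivity
  · rw [h.neg_one_pow]
    fin_cases x <;> norm_num <;> positivity

lemma phid_sum (x y : Fin 2) (l : Fin 2 × Fin 2) : ∑ a, ∑ b, Phid a b x y l = 1 := by
  obtain ⟨l1, l2⟩ := l
  fin_cases l1 <;> fin_cases l2 <;> fin_cases x <;> fin_cases y <;>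
    simp [Phid, Fin.sum_univ_two] <;> norm_num <;> ring

lemma decomp (a b x y : Fin 2) :
    σGHZ a b x y = ∑ l : Fin 2 × Fin 2, ((1 / 4 : ℝ) * Phid a b x y l) • ϱhid l := by
  rw [Fintype.sum_prod_type]
  simp only [Fin.sum_univ_two, rho_eq, Phid]
  ext i j
  fin_cases b <;> fin_cases i <;> fin_cases j <;>
    · simp only [σGHZ, X, Z, Matrix.add_apply, Matrix.smul_apply, Matrix.one_apply,
        Matrix.cons_val', Matrix.cons_val_zero, Matrix.cons_val_one, Matrix.head_cons,
        Matrix.head_fin_const, Matrix.empty_val', Matrix.cons_val_fin_one,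
        Fin.isValue, Fin.val_zero, Fin.val_one, pow_zero, pow_one, pow_add,
        if_true, if_false, Fin.zero_eta, Fin.mk_one]
      norm_num
      push_cast
      ring

theorem ghz_assemblage_LHS :
    (∀ l : Fin 2 × Fin 2, (ϱhid l).PosSemidef ∧ (ϱhid l).trace = 1) ∧
    (∀ (a b x y : Fin 2) (l : Fin 2 × Fin 2), 0 ≤ Phid a b x y l) ∧
    (∀ (x y : Fin 2) (l : Fin 2 × Fin 2), ∑ a, ∑ b, Phid a b x y l = 1) ∧
    (∀ a b x y : Fin 2,
      σGHZ a b x y = ∑ l : Fin 2 × Fin 2, ((1 / 4 : ℝ) * Phid a b x y l) • ϱhid l) ∧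
    IsLHS3 σGHZ := by
  refine ⟨fun l => ⟨rho_psd l, rho_trace l⟩, phid_nonneg, phid_sum, decomp, ?_⟩
  have e : Fin 4 ≃ Fin 2 × Fin 2 := (finCongr (by norm_num)).trans finProdFinEquiv.symm
  refine ⟨4, fun _ => 1/4, fun l => ϱhid (e l), fun a b x y l => Phid a b x y (e l),
    fun _ => by norm_num, by norm_num, fun l => rho_psd _, fun l => rho_trace _,
    fun a b x y l => phid_nonneg _ _ _ _ _, fun x y l => phid_sum x y (e l), ?_⟩
  intro a b x y
  rw [decomp a b x y, ← Equiv.sum_comp e (fun l => ((1 / 4 : ℝ) * Phid a b x y l) • ϱhid l)]
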